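/- arXiv:2511.11082 — 2 statements merged into one kernel-verified Lean document; each statement's English description precedes it below -/
import Mathlib

section
/- For α > 0, t > 0 and m ∈ ℝ with m ≠ 0, the Riemann–Liouville fractional integral of f(t) = e^{imt} equals (im)^{-α} e^{imt} (1 − Γ(α, imt)/Γ(α)), where Γ(s,x) = ∫ₓ^∞ τ^{s-1} e^{-τ} dτ is the upper incomplete gamma function (with the contour/branch taken in the natural way). -/
open intervalIntegral Real Filter Topology Complex

/-- Riemann-Liouville fractional integral of order `α > 0` of a complex-valued function. -/
noncomputable def rlIntegralC (α : ℝ) (f : ℝ → ℂ) (t : ℝ) : ℂ :=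
  (1 / (Real.Gamma α : ℂ)) * ∫ τ in (0:ℝ)..t, f τ * ((t : ℂ) - τ) ^ ((α : ℂ) - 1)

/-- Upper incomplete gamma function `Γ(s, x) = ∫ₓ^∞ τ^{s-1} e^{-τ} dτ`, with the contour
taken as the horizontal ray `x + u`, `u ∈ (0, ∞)` (the natural branch). -/
noncomputable def upperGamma (s x : ℂ) : ℂ :=
  ∫ u in Set.Ioi (0:ℝ), (x + u) ^ (s - 1) * Complex.exp (-(x + u))

namespace RLExpAux

open MeasureTheory Set Asymptotics

private lemma rpow_sandwich {a x c : ℝ} (γ : ℝ) (ha : 0 < a) (h1 : a ≤ x) (h2 : x ≤ c) :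
    x ^ γ ≤ a ^ γ + c ^ γ := by
  rcases le_or_gt 0 γ with hγ | hγ
  · calc x ^ γ ≤ c ^ γ := Real.rpow_le_rpow (ha.le.trans h1) h2 hγ
      _ ≤ a ^ γ + c ^ γ := le_add_of_nonneg_left (Real.rpow_nonneg ha.le γ)
  · calc x ^ γ ≤ a ^ γ := Real.rpow_le_rpow_of_nonpos ha h1 hγ.le
      _ ≤ a ^ γ + c ^ γ :=
        le_add_of_nonneg_right (Real.rpow_nonneg (by linarith) γ)

private lemma tendsto_shift_rpow_exp (c γ : ℝ) :
    Tendsto (fun u : ℝ => (u + c) ^ γ * Real.exp (-u)) atTop (𝓝 0) := by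
  have h1 : Tendsto (fun x : ℝ => x ^ γ * Real.exp (-1 * x)) atTop (𝓝 0) :=
    tendsto_rpow_mul_exp_neg_mul_atTop_nhds_zero γ 1 one_pos
  have h2 : Tendsto (fun u : ℝ => (u + c) ^ γ * Real.exp (-1 * (u + c))) atTop (𝓝 0) :=
    h1.comp (tendsto_atTop_add_const_right atTop c tendsto_id)
  have h3 := h2.const_mul (Real.exp c)
  rw [mul_zero] at h3
  refine h3.congr fun u => ?_
  rw [show Real.exp c * ((u + c) ^ γ * Real.exp (-1 * (u + c)))
      = (u + c) ^ γ * (Real.exp c * Real.exp (-1 * (u + c))) from by ring, ← Real.exp_add]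
  congr 2
  ring

private lemma integrableOn_shift_rpow_exp {c : ℝ} (hc : 0 < c) (γ : ℝ) :
    IntegrableOn (fun u : ℝ => (u + c) ^ γ * Real.exp (-u)) (Ioi (0:ℝ)) := by
  refine integrable_of_isBigO_exp_neg one_half_pos ?_ ?_
  · intro x hx
    have hx0 : (0:ℝ) ≤ x := hx
    have hx' : (0:ℝ) < x + c := by linarith
    exact ((continuousWithinAt_id.add continuousWithinAt_const).rpow_const
      (Or.inl hx'.ne')).mul (Real.continuous_exp.comp continuous_neg).continuousWithinAt
  · have h1 : Tendsto (fun x : ℝ => x ^ γ * Real.exp (-(1/2) * x)) atTop (𝓝 0) :=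
      tendsto_rpow_mul_exp_neg_mul_atTop_nhds_zero γ (1/2) one_half_pos
    have h2 := (h1.comp (tendsto_atTop_add_const_right atTop c tendsto_id)).const_mul
      (Real.exp (c/2))
    rw [mul_zero] at h2
    refine (isLittleO_of_tendsto (fun x hx => absurd hx (Real.exp_ne_zero _))
      (h2.congr fun u => ?_)).isBigO
    show Real.exp (c/2) * ((u + c) ^ γ * Real.exp (-(1/2) * (u + c)))
      = ((u + c) ^ γ * Real.exp (-u)) / Real.exp (-(1/2) * u)
    rw [eq_div_iff (Real.exp_ne_zero _)]
    rw [show Real.exp (c/2) * ((u + c) ^ γ * Real.exp (-(1/2) * (u + c))) * Real.exp (-(1/2) * u)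
      = (u + c) ^ γ * (Real.exp (c/2) * (Real.exp (-(1/2) * (u + c)) * Real.exp (-(1/2) * u)))
      from by ring, ← Real.exp_add, ← Real.exp_add]
    congr 2
    ring

private noncomputable def gfun (α : ℝ) (w : ℂ) : ℂ := w ^ ((α:ℂ) - 1) * Complex.exp (-w)

private noncomputable def gfun' (α : ℝ) (w : ℂ) : ℂ :=
  ((α:ℂ) - 1) * w ^ ((α:ℂ) - 2) * Complex.exp (-w) - w ^ ((α:ℂ) - 1) * Complex.exp (-w)

private lemma hasDerivAt_gfun {α : ℝ} {w : ℂ} (hw : w ∈ Complex.slitPlane) :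
    HasDerivAt (gfun α) (gfun' α w) w := by
  have h1 : HasDerivAt (fun w : ℂ => w ^ ((α:ℂ) - 1)) (((α:ℂ) - 1) * w ^ ((α:ℂ) - 1 - 1) * 1) w :=
    (hasDerivAt_id w).cpow_const hw
  have h2 : HasDerivAt (fun w : ℂ => Complex.exp (-w)) (Complex.exp (-w) * -1) w :=
    ((hasDerivAt_id w).neg).cexp
  have h3 := h1.mul h2
  have he : ((α:ℂ) - 1 - 1) = ((α:ℂ) - 2) := by ring
  rw [he] at h3
  refine h3.congr_deriv ?_
  unfold gfun'
  ring

private lemma norm_gfun {α : ℝ} {w : ℂ} (hw : w ≠ 0) :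
    ‖gfun α w‖ = ‖w‖ ^ (α - 1) * Real.exp (-w.re) := by
  have h := Complex.norm_cpow_of_ne_zero hw ((α:ℂ) - 1)
  simp only [Complex.sub_re, Complex.ofReal_re, Complex.one_re, Complex.sub_im,
    Complex.ofReal_im, Complex.one_im, sub_self, mul_zero, Real.exp_zero, div_one] at h
  rw [gfun, norm_mul, h, Complex.norm_exp,
    Complex.neg_re]

private lemma norm_gfun'_le {α : ℝ} {w : ℂ} (hw : w ≠ 0) :
    ‖gfun' α w‖ ≤ (|α - 1| * ‖w‖ ^ (α - 2) + ‖w‖ ^ (α - 1))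
      * Real.exp (-w.re) := by
  have h1 := Complex.norm_cpow_of_ne_zero hw ((α:ℂ) - 1)
  have h2 := Complex.norm_cpow_of_ne_zero hw ((α:ℂ) - 2)
  simp only [Complex.sub_re, Complex.ofReal_re, Complex.one_re, Complex.sub_im,
    Complex.ofReal_im, Complex.one_im, sub_self, mul_zero, Real.exp_zero, div_one] at h1
  have hre2 : ((α:ℂ) - 2).re = α - 2 := by simp
  have him2 : ((α:ℂ) - 2).im = 0 := by simp
  rw [hre2, him2, mul_zero, Real.exp_zero, div_one] at h2
  calc ‖gfun' α w‖
      ≤ ‖((α:ℂ) - 1) * w ^ ((α:ℂ) - 2) * Complex.exp (-w)‖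
        + ‖w ^ ((α:ℂ) - 1) * Complex.exp (-w)‖ := norm_sub_le _ _
    _ = |α - 1| * ‖w‖ ^ (α - 2) * Real.exp (-w.re)
        + ‖w‖ ^ (α - 1) * Real.exp (-w.re) := by
        rw [norm_mul, norm_mul, norm_mul]
        simp only [Complex.norm_exp, Complex.neg_re, h1, h2]
        congr 2
        rw [show ((α:ℂ) - 1) = (((α - 1 : ℝ)):ℂ) from by push_cast; ring, Complex.norm_real, Real.norm_eq_abs]
    _ = (|α - 1| * ‖w‖ ^ (α - 2) + ‖w‖ ^ (α - 1)) * Real.exp (-w.re) := by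
        ring

private lemma norm_gfun_le_of {α a c : ℝ} {w : ℂ} (ha : 0 < a)
    (h1 : a ≤ ‖w‖) (h2 : ‖w‖ ≤ c) :
    ‖gfun α w‖ ≤ (a ^ (α - 1) + c ^ (α - 1)) * Real.exp (-w.re) := by
  have hw : w ≠ 0 := by
    intro h
    rw [h] at h1
    simp only [norm_zero] at h1
    linarith
  rw [norm_gfun hw]
  exact mul_le_mul_of_nonneg_right (rpow_sandwich _ ha h1 h2) (Real.exp_pos _).le

private lemma norm_gfun'_le_of {α a c : ℝ} {w : ℂ} (ha : 0 < a)
    (h1 : a ≤ ‖w‖) (h2 : ‖w‖ ≤ c) :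
    ‖gfun' α w‖ ≤ (|α - 1| * (a ^ (α - 2) + c ^ (α - 2)) + (a ^ (α - 1) + c ^ (α - 1)))
      * Real.exp (-w.re) := by
  have hw : w ≠ 0 := by
    intro h
    rw [h] at h1
    simp only [norm_zero] at h1
    linarith
  refine (norm_gfun'_le hw).trans ?_
  have hs1 := rpow_sandwich (α - 1) ha h1 h2
  have hs2 := rpow_sandwich (α - 2) ha h1 h2
  have habs : (0:ℝ) ≤ |α - 1| := abs_nonneg _
  have hexp : (0:ℝ) ≤ Real.exp (-w.re) := (Real.exp_pos _).le
  apply mul_le_mul_of_nonneg_right _ hexp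
  have h3 := mul_le_mul_of_nonneg_left hs2 habs
  linarith

private lemma key {α m t : ℝ} (hα : 0 < α) (hm : m ≠ 0) (ht : 0 < t) :
    upperGamma (α:ℂ) (Complex.I * m * t) + (Complex.I * m) ^ (α:ℂ) *
      (∫ τ in (0:ℝ)..t, (τ:ℂ) ^ ((α:ℂ) - 1) * Complex.exp (-(Complex.I * m * τ))) =
    Complex.Gamma (α:ℂ) := by
  have hm' : (0:ℝ) < |m| := abs_pos.2 hm
  set z : ℂ := Complex.I * (m:ℝ) with hzdef
  have hz0 : z ≠ 0 := by
    simp [hzdef, Complex.I_ne_zero, hm]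
  have habs_z : ‖z‖ = |m| := by
    simp [hzdef]
  have hre : ∀ s u : ℝ, (z * s + u).re = u := by
    intro s u
    simp [hzdef]
  have him : ∀ s u : ℝ, (z * s + u).im = m * s := by
    intro s u
    simp [hzdef]
  have hslit : ∀ s u : ℝ, s ≠ 0 → z * s + u ∈ Complex.slitPlane := by
    intro s u hs
    exact Complex.mem_slitPlane_iff.2 (Or.inr (by rw [him]; exact mul_ne_zero hm hs))
  have hub : ∀ s u : ℝ, 0 ≤ u → ‖z * s + u‖ ≤ u + |m| * |s| := by
    intro s u hu
    calc ‖z * s + u‖ ≤ |(z * s + u).re| + |(z * s + u).im| :=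
          Complex.norm_le_abs_re_add_abs_im _
      _ = u + |m| * |s| := by rw [hre, him, _root_.abs_of_nonneg hu, abs_mul]
  have hlb1 : ∀ s u : ℝ, 0 ≤ u → u ≤ ‖z * s + u‖ := by
    intro s u hu
    calc u = |(z * s + u).re| := by rw [hre, _root_.abs_of_nonneg hu]
      _ ≤ ‖z * s + u‖ := Complex.abs_re_le_norm _
  have hlb2 : ∀ s u : ℝ, |m| * |s| ≤ ‖z * s + u‖ := by
    intro s u
    calc |m| * |s| = |(z * s + u).im| := by rw [him, abs_mul]
      _ ≤ ‖z * s + u‖ := Complex.abs_im_le_norm _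
  -- continuity facts
  have hgcont : ∀ x : ℝ, 0 < x → ContinuousOn (fun u : ℝ => gfun α (z * x + u)) (Ici 0) := by
    intro x hx u _
    have hinner : ContinuousAt (fun u : ℝ => z * x + (u:ℂ)) u := by fun_prop
    have hcp : ContinuousAt (fun u : ℝ => (z * x + (u:ℂ)) ^ ((α:ℂ) - 1)) u :=
      hinner.cpow continuousAt_const (hslit x u hx.ne')
    have hex : ContinuousAt (fun u : ℝ => Complex.exp (-(z * x + (u:ℂ)))) u := by fun_prop
    exact (hcp.mul hex).continuousWithinAt
  have hg'cont : ∀ x : ℝ, 0 < x → ContinuousOn (fun u : ℝ => gfun' α (z * x + u)) (Ici 0) := by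
    intro x hx u _
    have hinner : ContinuousAt (fun u : ℝ => z * x + (u:ℂ)) u := by fun_prop
    have hcp1 : ContinuousAt (fun u : ℝ => (z * x + (u:ℂ)) ^ ((α:ℂ) - 2)) u :=
      hinner.cpow continuousAt_const (hslit x u hx.ne')
    have hcp2 : ContinuousAt (fun u : ℝ => (z * x + (u:ℂ)) ^ ((α:ℂ) - 1)) u :=
      hinner.cpow continuousAt_const (hslit x u hx.ne')
    have hex : ContinuousAt (fun u : ℝ => Complex.exp (-(z * x + (u:ℂ)))) u := by fun_prop
    exact (((continuousAt_const.mul hcp1).mul hex).sub (hcp2.mul hex)).continuousWithinAt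
  -- the primitive P
  set P : ℝ → ℂ := fun s => ∫ τ in (0:ℝ)..s, (τ:ℂ) ^ ((α:ℂ) - 1) * Complex.exp (-(z * τ))
    with hPdef
  set Φ : ℝ → ℂ := fun s => ∫ u in Ioi (0:ℝ), gfun α (z * s + u) with hΦdef
  have hPcont : ∀ τ : ℝ, 0 < τ →
      ContinuousAt (fun τ : ℝ => (τ:ℂ) ^ ((α:ℂ) - 1) * Complex.exp (-(z * τ))) τ := by
    intro τ hτ
    have h1 : ContinuousAt (fun τ : ℝ => ((τ:ℝ):ℂ)) τ := by fun_prop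
    have hcp : ContinuousAt (fun τ : ℝ => ((τ:ℝ):ℂ) ^ ((α:ℂ) - 1)) τ :=
      h1.cpow continuousAt_const (Complex.mem_slitPlane_iff.2 (Or.inl (by simpa using hτ)))
    have hex : ContinuousAt (fun τ : ℝ => Complex.exp (-(z * τ))) τ := by fun_prop
    exact hcp.mul hex
  have hPint : ∀ x : ℝ, 0 < x →
      IntervalIntegrable (fun τ : ℝ => (τ:ℂ) ^ ((α:ℂ) - 1) * Complex.exp (-(z * τ)))
        volume 0 x := by
    intro x hx
    rw [intervalIntegrable_iff_integrableOn_Ioc_of_le hx.le]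
    have hbase : IntegrableOn (fun τ : ℝ => τ ^ (α - 1)) (Ioc (0:ℝ) x) := by
      have h := intervalIntegral.intervalIntegrable_rpow' (a := 0) (b := x)
        (show (-1:ℝ) < α - 1 by linarith)
      rwa [intervalIntegrable_iff_integrableOn_Ioc_of_le hx.le] at h
    refine hbase.mono' ?_ ?_
    · exact ContinuousOn.aestronglyMeasurable
        (fun τ hτ => (hPcont τ hτ.1).continuousWithinAt) measurableSet_Ioc
    · filter_upwards [ae_restrict_mem measurableSet_Ioc] with τ hτ
      rw [norm_mul, Complex.norm_exp,
        Complex.norm_cpow_eq_rpow_re_of_pos hτ.1]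
      have h1 : ((α:ℂ) - 1).re = α - 1 := by simp
      have h2 : (-(z * (τ:ℝ))).re = 0 := by simp [hzdef]
      rw [h1, h2, Real.exp_zero, mul_one]
  have hPderiv : ∀ s : ℝ, 0 < s →
      HasDerivAt P ((s:ℂ) ^ ((α:ℂ) - 1) * Complex.exp (-(z * s))) s := by
    intro s hs
    refine intervalIntegral.integral_hasDerivAt_right (hPint s hs)
      ⟨Ioi 0, Ioi_mem_nhds hs, ContinuousOn.aestronglyMeasurable
        (fun τ hτ => (hPcont τ hτ).continuousWithinAt) measurableSet_Ioi⟩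
      (hPcont s hs)
  -- derivative of Φ
  have hΦderiv : ∀ s : ℝ, 0 < s → HasDerivAt Φ (-(z * gfun α (z * s))) s := by
    intro s hs
    set a₀ : ℝ := |m| * (s / 2) with ha₀def
    set b₀ : ℝ := 2 * (|m| * s) with hb₀def
    have ha₀ : 0 < a₀ := by positivity
    have hb₀ : 0 < b₀ := by positivity
    have hmeas : ∀ᶠ (x : ℝ) in 𝓝 s, AEStronglyMeasurable (fun u : ℝ => gfun α (z * x + u))
        (volume.restrict (Ioi (0:ℝ))) := by
      filter_upwards [eventually_gt_nhds hs] with x hx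
      exact ((hgcont x hx).mono Ioi_subset_Ici_self).aestronglyMeasurable measurableSet_Ioi
    have hint : Integrable (fun u : ℝ => gfun α (z * s + u)) (volume.restrict (Ioi (0:ℝ))) := by
      have e1 : IntegrableOn (fun u : ℝ => Real.exp (-u)) (Ioi (0:ℝ)) := by
        simpa using exp_neg_integrableOn_Ioi 0 one_pos
      refine Integrable.mono'
        (g := fun u : ℝ => a₀ ^ (α - 1) * Real.exp (-u) + (u + b₀) ^ (α - 1) * Real.exp (-u))
        ((e1.const_mul _).add (integrableOn_shift_rpow_exp hb₀ (α - 1)))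
        (((hgcont s hs).mono Ioi_subset_Ici_self).aestronglyMeasurable measurableSet_Ioi) ?_
      filter_upwards [ae_restrict_mem measurableSet_Ioi] with u hu
      have h1 : a₀ ≤ ‖z * s + u‖ := by
        refine le_trans ?_ (hlb2 s u)
        rw [_root_.abs_of_pos hs, ha₀def]
        nlinarith
      have h2 : ‖z * s + u‖ ≤ u + b₀ := by
        refine (hub s u (le_of_lt hu)).trans ?_
        rw [_root_.abs_of_pos hs, hb₀def]
        nlinarith
      have h3 := norm_gfun_le_of (α := α) ha₀ h1 h2
      rw [hre] at h3
      calc ‖gfun α (z * s + u)‖ ≤ (a₀ ^ (α - 1) + (u + b₀) ^ (α - 1)) * Real.exp (-u) := h3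
        _ = a₀ ^ (α - 1) * Real.exp (-u) + (u + b₀) ^ (α - 1) * Real.exp (-u) := by ring
    have hmeas' : AEStronglyMeasurable (fun u : ℝ => z * gfun' α (z * s + u))
        (volume.restrict (Ioi (0:ℝ))) :=
      (((hg'cont s hs).mono Ioi_subset_Ici_self).aestronglyMeasurable
        measurableSet_Ioi).const_mul z
    have hbound : ∀ᵐ (u : ℝ) ∂(volume.restrict (Ioi (0:ℝ))), ∀ x ∈ Metric.ball s (s/2),
        ‖z * gfun' α (z * x + u)‖ ≤ |m| * ((|α - 1| * (a₀ ^ (α - 2) + (u + b₀) ^ (α - 2))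
          + (a₀ ^ (α - 1) + (u + b₀) ^ (α - 1))) * Real.exp (-u)) := by
      filter_upwards [ae_restrict_mem measurableSet_Ioi] with u hu x hx
      rw [Metric.mem_ball, Real.dist_eq] at hx
      obtain ⟨hx1, hx2⟩ := abs_lt.1 hx
      have hx0 : 0 < x := by linarith
      have h1 : a₀ ≤ ‖z * x + u‖ := by
        refine le_trans ?_ (hlb2 x u)
        rw [_root_.abs_of_pos hx0, ha₀def]
        nlinarith
      have h2 : ‖z * x + u‖ ≤ u + b₀ := by
        refine (hub x u (le_of_lt hu)).trans ?_
        rw [_root_.abs_of_pos hx0, hb₀def]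
        nlinarith
      have hn := norm_gfun'_le_of (α := α) ha₀ h1 h2
      rw [hre] at hn
      rw [norm_mul, habs_z]
      exact mul_le_mul_of_nonneg_left hn (abs_nonneg m)
    have hboundint : Integrable (fun u : ℝ => |m| * ((|α - 1| * (a₀ ^ (α - 2)
        + (u + b₀) ^ (α - 2)) + (a₀ ^ (α - 1) + (u + b₀) ^ (α - 1))) * Real.exp (-u)))
        (volume.restrict (Ioi (0:ℝ))) := by
      have e1 : IntegrableOn (fun u : ℝ => Real.exp (-u)) (Ioi (0:ℝ)) := by
        simpa using exp_neg_integrableOn_Ioi 0 one_pos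
      have hb : IntegrableOn (fun u : ℝ =>
          (|m| * (|α - 1| * a₀ ^ (α - 2))) * Real.exp (-u)
          + (|m| * |α - 1|) * ((u + b₀) ^ (α - 2) * Real.exp (-u))
          + ((|m| * a₀ ^ (α - 1)) * Real.exp (-u)
          + |m| * ((u + b₀) ^ (α - 1) * Real.exp (-u)))) (Ioi 0) :=
        (((e1.const_mul _).add ((integrableOn_shift_rpow_exp hb₀ (α - 2)).const_mul _)).add
          ((e1.const_mul _).add ((integrableOn_shift_rpow_exp hb₀ (α - 1)).const_mul _)))
      exact hb.congr_fun (fun u _ => by ring) measurableSet_Ioi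
    have hdiff : ∀ᵐ (u : ℝ) ∂(volume.restrict (Ioi (0:ℝ))), ∀ x ∈ Metric.ball s (s/2),
        HasDerivAt (fun x : ℝ => gfun α (z * x + u)) (z * gfun' α (z * x + u)) x := by
      filter_upwards [ae_restrict_mem measurableSet_Ioi] with u _ x hx
      rw [Metric.mem_ball, Real.dist_eq] at hx
      obtain ⟨hx1, hx2⟩ := abs_lt.1 hx
      have hx0 : 0 < x := by linarith
      have inner : HasDerivAt (fun w : ℂ => z * w + (u:ℂ)) z (x:ℂ) := by
        simpa using ((hasDerivAt_id ((x:ℝ):ℂ)).const_mul z).add_const ((u:ℝ):ℂ)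
      have hcomp := (hasDerivAt_gfun (α := α) (hslit x u hx0.ne')).comp ((x:ℝ):ℂ) inner
      have hfin := hcomp.comp_ofReal
      simpa [Function.comp, mul_comm] using hfin
    obtain ⟨hF'int, hmain⟩ := _root_.hasDerivAt_integral_of_dominated_loc_of_deriv_le
      (μ := volume.restrict (Ioi 0))
      (F := fun (x : ℝ) (u : ℝ) => gfun α (z * x + u))
      (F' := fun (x : ℝ) (u : ℝ) => z * gfun' α (z * x + u))
      (Metric.ball_mem_nhds s (half_pos hs)) hmeas hint hmeas' hbound hboundint hdiff
    -- evaluate the integral of F'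
    have hg'int : IntegrableOn (fun u : ℝ => gfun' α (z * s + u)) (Ioi (0:ℝ)) := by
      have h := hF'int.const_mul z⁻¹
      exact h.congr (Eventually.of_forall fun u => by
        simp [← mul_assoc, inv_mul_cancel₀ hz0])
    have hueval : (∫ u in Ioi (0:ℝ), gfun' α (z * s + u)) = 0 - gfun α (z * s + ((0:ℝ):ℂ)) := by
      refine integral_Ioi_of_hasDerivAt_of_tendsto ((hgcont s hs) 0 self_mem_Ici) ?_ hg'int ?_
      · intro u hu
        have inner : HasDerivAt (fun w : ℂ => z * (s:ℂ) + w) 1 ((u:ℝ):ℂ) := by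
          simpa using (hasDerivAt_id ((u:ℝ):ℂ)).const_add (z * (s:ℂ))
        have hcomp := (hasDerivAt_gfun (α := α) (hslit s u hs.ne')).comp ((u:ℝ):ℂ) inner
        have hfin := hcomp.comp_ofReal
        simpa [Function.comp] using hfin
      · have ha₁ : (0:ℝ) < |m| * s := by positivity
        refine squeeze_zero_norm'
          (a := fun u : ℝ => (|m| * s) ^ (α - 1) * Real.exp (-u)
            + (u + |m| * s) ^ (α - 1) * Real.exp (-u)) ?_ ?_
        · filter_upwards [eventually_ge_atTop (0:ℝ)] with u hu
          have h1 : |m| * s ≤ ‖z * s + u‖ := by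
            have h := hlb2 s u
            rwa [_root_.abs_of_pos hs] at h
          have h2 : ‖z * s + u‖ ≤ u + |m| * s := by
            have h := hub s u hu
            rwa [_root_.abs_of_pos hs] at h
          have h3 := norm_gfun_le_of (α := α) ha₁ h1 h2
          rw [hre] at h3
          calc ‖gfun α (z * s + u)‖
              ≤ ((|m| * s) ^ (α - 1) + (u + |m| * s) ^ (α - 1)) * Real.exp (-u) := h3
            _ = (|m| * s) ^ (α - 1) * Real.exp (-u)
                + (u + |m| * s) ^ (α - 1) * Real.exp (-u) := by ring
        · have t1 : Tendsto (fun u : ℝ => (|m| * s) ^ (α - 1) * Real.exp (-u)) atTop (𝓝 0) := by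
            have h : Tendsto (fun u : ℝ => Real.exp (-u)) atTop (𝓝 0) :=
              Real.tendsto_exp_atBot.comp tendsto_neg_atTop_atBot
            simpa using h.const_mul ((|m| * s) ^ (α - 1))
          have t2 := tendsto_shift_rpow_exp (|m| * s) (α - 1)
          simpa using t1.add t2
    have heval : (∫ u in Ioi (0:ℝ), z * gfun' α (z * s + u)) = -(z * gfun α (z * s)) := by
      rw [MeasureTheory.integral_const_mul, hueval]
      rw [show z * (s:ℂ) + ((0:ℝ):ℂ) = z * s from by push_cast; ring]
      ring
    rw [heval] at hmain
    exact hmain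
  -- zero derivative of the combination
  have hDderiv : ∀ s : ℝ, 0 < s → HasDerivAt (fun s => Φ s + z ^ (α:ℂ) * P s) 0 s := by
    intro s hs
    have h2 := HasDerivAt.const_mul (z ^ (α:ℂ)) (hPderiv s hs)
    have h3 := (hΦderiv s hs).add h2
    refine h3.congr_deriv (Eq.symm ?_)
    have hs0 : ((s:ℝ):ℂ) ≠ 0 := Complex.ofReal_ne_zero.2 hs.ne'
    have hzs : (z * (s:ℂ)) ^ ((α:ℂ) - 1) = z ^ ((α:ℂ) - 1) * (s:ℂ) ^ ((α:ℂ) - 1) := by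
      rw [mul_comm z ((s:ℂ))]
      rw [Complex.cpow_def_of_ne_zero (mul_ne_zero hs0 hz0),
        Complex.cpow_def_of_ne_zero hz0, Complex.cpow_def_of_ne_zero hs0,
        Complex.log_ofReal_mul hs hz0, ← Complex.ofReal_log hs.le, ← Complex.exp_add]
      congr 1
      ring
    have hz1 : z ^ (α:ℂ) = z ^ ((α:ℂ) - 1) * z := by
      conv_lhs => rw [show (α:ℂ) = ((α:ℂ) - 1) + 1 from by ring]
      rw [Complex.cpow_add _ _ hz0, Complex.cpow_one]
    show (0:ℂ) = -(z * gfun α (z * s)) + z ^ (α:ℂ) * ((s:ℂ) ^ ((α:ℂ) - 1)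
      * Complex.exp (-(z * s)))
    simp only [gfun]
    rw [hzs, hz1]
    ring
  -- constancy on (0, t]
  have hconst : ∀ ε : ℝ, ε ∈ Ioo 0 t → Φ t + z ^ (α:ℂ) * P t = Φ ε + z ^ (α:ℂ) * P ε := by
    intro ε hε
    have h := constant_of_has_deriv_right_zero
      (f := fun s => Φ s + z ^ (α:ℂ) * P s) (a := ε) (b := t)
      (fun x hx => ((hDderiv x (hε.1.trans_le hx.1)).continuousAt.continuousWithinAt))
      (fun x hx => (hDderiv x (hε.1.trans_le hx.1)).hasDerivWithinAt)
    exact h t (right_mem_Icc.2 hε.2.le)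
  -- Γ as the limit at 0⁺
  have hGi : Complex.Gamma (α:ℂ) = ∫ u in Ioi (0:ℝ), gfun α ((u:ℝ):ℂ) := by
    rw [Complex.Gamma_eq_integral (by simpa using hα)]
    unfold Complex.GammaIntegral
    refine setIntegral_congr_fun measurableSet_Ioi fun u hu => ?_
    rw [gfun, mul_comm]
    congr 1
    rw [← Complex.ofReal_neg, Complex.ofReal_exp]
  have hΦ0 : Tendsto Φ (𝓝[>] (0:ℝ)) (𝓝 (Complex.Gamma (α:ℂ))) := by
    rw [hGi]
    refine tendsto_integral_filter_of_dominated_convergence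
      (bound := fun u => u ^ (α - 1) * Real.exp (-u) + (u + |m|) ^ (α - 1) * Real.exp (-u))
      ?_ ?_ ?_ ?_
    · filter_upwards [self_mem_nhdsWithin] with s hs
      exact ((hgcont s hs).mono Ioi_subset_Ici_self).aestronglyMeasurable measurableSet_Ioi
    · filter_upwards [Ioo_mem_nhdsGT zero_lt_one] with s hs
      filter_upwards [ae_restrict_mem measurableSet_Ioi] with u hu
      have h1 : u ≤ ‖z * s + u‖ := hlb1 s u (le_of_lt hu)
      have h2 : ‖z * s + u‖ ≤ u + |m| := by
        refine (hub s u (le_of_lt hu)).trans ?_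
        have hs1 : |s| ≤ 1 := by
          rw [_root_.abs_of_pos hs.1]
          exact hs.2.le
        nlinarith
      have h3 := norm_gfun_le_of (α := α) hu h1 h2
      rw [hre] at h3
      calc ‖gfun α (z * s + u)‖ ≤ (u ^ (α - 1) + (u + |m|) ^ (α - 1)) * Real.exp (-u) := h3
        _ = u ^ (α - 1) * Real.exp (-u) + (u + |m|) ^ (α - 1) * Real.exp (-u) := by ring
    · have h1 : IntegrableOn (fun u : ℝ => u ^ (α - 1) * Real.exp (-u)) (Ioi (0:ℝ)) := by
        have h := Real.GammaIntegral_convergent hα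
        exact h.congr_fun (fun u _ => by ring) measurableSet_Ioi
      exact h1.add (integrableOn_shift_rpow_exp hm' (α - 1))
    · filter_upwards [ae_restrict_mem measurableSet_Ioi] with u hu
      have hcont0 : ContinuousAt (fun s : ℝ => gfun α (z * s + u)) 0 := by
        have hinner : ContinuousAt (fun s : ℝ => z * s + (u:ℂ)) 0 := by fun_prop
        have hsl : (fun s : ℝ => z * s + ((u:ℝ):ℂ)) 0 ∈ Complex.slitPlane := by
          simp only [Complex.ofReal_zero, mul_zero, zero_add]
          exact Complex.mem_slitPlane_iff.2 (Or.inl (by simpa using hu))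
        have hcp := ContinuousAt.cpow hinner (continuousAt_const (y := (α:ℂ) - 1)) hsl
        have hex : ContinuousAt (fun s : ℝ => Complex.exp (-(z * s + (u:ℂ)))) 0 := by fun_prop
        exact hcp.mul hex
      have h : Tendsto (fun s : ℝ => gfun α (z * s + u)) (𝓝[>] (0:ℝ))
          (𝓝 (gfun α (z * ((0:ℝ):ℂ) + ((u:ℝ):ℂ)))) :=
        (hcont0.tendsto).mono_left nhdsWithin_le_nhds
      simpa using h
  have hP0 : Tendsto P (𝓝[>] (0:ℝ)) (𝓝 0) := by
    have hc := intervalIntegral.continuousOn_primitive_interval' (hPint t ht) left_mem_uIcc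
    have hcw : ContinuousWithinAt P (Ioo 0 t) 0 :=
      (hc 0 left_mem_uIcc).mono (by
        rw [uIcc_of_le ht.le]
        exact Ioo_subset_Icc_self)
    have h2 : Tendsto P (𝓝[>] (0:ℝ)) (𝓝 (P 0)) := by
      rw [← nhdsWithin_Ioo_eq_nhdsGT ht]
      exact hcw
    simpa [hPdef, intervalIntegral.integral_same] using h2
  have hDlim : Tendsto (fun s => Φ s + z ^ (α:ℂ) * P s) (𝓝[>] (0:ℝ))
      (𝓝 (Complex.Gamma (α:ℂ))) := by
    have h := hΦ0.add (hP0.const_mul (z ^ (α:ℂ)))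
    simpa using h
  have hDconst : Tendsto (fun s => Φ s + z ^ (α:ℂ) * P s) (𝓝[>] (0:ℝ))
      (𝓝 (Φ t + z ^ (α:ℂ) * P t)) := by
    refine Tendsto.congr' ?_ tendsto_const_nhds
    filter_upwards [Ioo_mem_nhdsGT ht] with ε hε
    exact hconst ε hε
  have hfinal : Φ t + z ^ (α:ℂ) * P t = Complex.Gamma (α:ℂ) :=
    tendsto_nhds_unique hDconst hDlim
  exact hfinal

end RLExpAux

theorem rl_exponential (α : ℝ) (hα : 0 < α) (m : ℝ) (hm : m ≠ 0)
    (t : ℝ) (ht : 0 < t) :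
    rlIntegralC α (fun τ => Complex.exp (Complex.I * m * τ)) t =
      (Complex.I * m) ^ (-(α : ℂ)) * Complex.exp (Complex.I * m * t) *
        (1 - upperGamma (α : ℂ) (Complex.I * m * t) / Complex.Gamma (α : ℂ)) := by
  have hG0 : Real.Gamma α ≠ 0 := (Real.Gamma_pos_of_pos hα).ne'
  have hz0 : (Complex.I * (m:ℂ)) ≠ 0 := by simp [Complex.I_ne_zero, hm]
  have hkey := RLExpAux.key hα hm ht
  rw [rlIntegralC]
  have hsub : (∫ τ in (0:ℝ)..t, Complex.exp (Complex.I * m * τ) * ((t:ℂ) - τ) ^ ((α:ℂ) - 1))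
      = Complex.exp (Complex.I * m * t) *
        ∫ τ in (0:ℝ)..t, (τ:ℂ) ^ ((α:ℂ) - 1) * Complex.exp (-(Complex.I * m * τ)) := by
    have h1 := intervalIntegral.integral_comp_sub_left (a := (0:ℝ)) (b := t)
      (fun u : ℝ => Complex.exp (Complex.I * m * t - Complex.I * m * ((u:ℝ):ℂ))
        * ((u:ℝ):ℂ) ^ ((α:ℂ) - 1)) t
    rw [sub_self, sub_zero] at h1
    calc (∫ τ in (0:ℝ)..t, Complex.exp (Complex.I * m * τ) * ((t:ℂ) - τ) ^ ((α:ℂ) - 1))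
        = ∫ τ in (0:ℝ)..t, Complex.exp (Complex.I * m * t - Complex.I * m * (((t - τ : ℝ)):ℂ))
            * (((t - τ : ℝ)):ℂ) ^ ((α:ℂ) - 1) := by
          refine intervalIntegral.integral_congr fun τ _ => ?_
          push_cast
          ring_nf
      _ = ∫ u in (0:ℝ)..t, Complex.exp (Complex.I * m * t - Complex.I * m * ((u:ℝ):ℂ))
            * ((u:ℝ):ℂ) ^ ((α:ℂ) - 1) := h1
      _ = Complex.exp (Complex.I * m * t) * ∫ τ in (0:ℝ)..t, (τ:ℂ) ^ ((α:ℂ) - 1)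
            * Complex.exp (-(Complex.I * m * τ)) := by
          rw [← intervalIntegral.integral_const_mul]
          refine intervalIntegral.integral_congr fun u _ => ?_
          rw [show Complex.I * m * t - Complex.I * m * ((u:ℝ):ℂ)
            = Complex.I * m * t + -(Complex.I * m * u) from by ring,
            Complex.exp_add]
          ring
  rw [hsub]
  have hGc : (Complex.Gamma (α:ℂ)) = ((Real.Gamma α : ℝ):ℂ) := Complex.Gamma_ofReal α
  have hGne : ((Real.Gamma α : ℝ):ℂ) ≠ 0 := Complex.ofReal_ne_zero.2 hG0
  have hzα : (Complex.I * (m:ℂ)) ^ (α:ℂ) ≠ 0 := by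
    intro h
    exact hz0 ((Complex.cpow_eq_zero_iff _ _).1 h).1
  rw [Complex.cpow_neg, hGc]
  rw [hGc] at hkey
  field_simp
  linear_combination hkey
end

section
/- Let N ∈ ℕ and define the (N+1)×(N+1) matrices M and P by M_{jk} = (2/N) ε_{jk} cos(jkπ/N) and P_{jk} = cos(jkπ/N) for 0 ≤ j,k ≤ N, where ε_{jk} = 1/4 if j,k ∈ {0,N}, ε_{jk} = 1/2 if exactly one of j,k lies in {0,N}, and ε_{jk} = 1 otherwise. Then M · P = I, i.e., M is the inverse of P. -/
open Real Matrix

lemma full_sum (N : ℕ) (hN : 0 < N) (m : ℤ) :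
    ∑ k ∈ Finset.range (2 * N), Real.cos ((m : ℝ) * k * π / N) =
      if (2 * (N : ℤ)) ∣ m then (2 * N : ℝ) else 0 := by
  by_cases h : (2 * (N : ℤ)) ∣ m
  · rw [if_pos h]
    obtain ⟨t, ht⟩ := h
    have h1 : ∀ k ∈ Finset.range (2 * N), Real.cos ((m : ℝ) * k * π / N) = 1 := by
      intro k _
      have hNr : (N : ℝ) ≠ 0 := Nat.cast_ne_zero.mpr hN.ne'
      have : (m : ℝ) * k * π / N = ((t * k : ℤ) : ℝ) * (2 * π) := by
        subst ht; push_cast; field_simp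
      rw [this, Real.cos_int_mul_two_pi]
    rw [Finset.sum_congr rfl h1]
    simp
  · rw [if_neg h]
    have hNr : (N : ℝ) ≠ 0 := Nat.cast_ne_zero.mpr hN.ne'
    set θ : ℝ := (m : ℝ) * π / N with hθ
    have hterm : ∀ k ∈ Finset.range (2 * N),
        Real.cos ((m : ℝ) * k * π / N) = (Complex.exp (θ * Complex.I) ^ k).re := by
      intro k _
      rw [← Complex.exp_nat_mul]
      have : (k : ℂ) * (θ * Complex.I) = ((k * θ : ℝ) : ℂ) * Complex.I := by
        push_cast; ring
      rw [this, Complex.exp_ofReal_mul_I_re]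
      congr 1
      rw [hθ]; ring
    rw [Finset.sum_congr rfl hterm, ← Complex.re_sum]
    have hz : Complex.exp (θ * Complex.I) ≠ 1 := by
      intro hz1
      rw [Complex.exp_eq_one_iff] at hz1
      obtain ⟨n, hn⟩ := hz1
      have hI : (θ : ℂ) = n * (2 * π) := by
        have hn2 : (θ : ℂ) * Complex.I = (n * (2 * π)) * Complex.I := by
          rw [hn]; ring
        exact mul_right_cancel₀ Complex.I_ne_zero hn2
      have : θ = n * (2 * π) := by
        exact_mod_cast hI
      rw [hθ] at this
      have hπ : (π : ℝ) ≠ 0 := Real.pi_ne_zero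
      have hm : (m : ℝ) * π = (2 * N * n) * π := by
        field_simp at this
        rw [this]; ring
      have hm2 : (m : ℝ) = 2 * N * n := mul_right_cancel₀ hπ hm
      have hm3 : (m : ℝ) = ((2 * (N : ℤ) * n : ℤ) : ℝ) := by push_cast; linarith [hm2]
      exact h ⟨n, by exact_mod_cast hm3⟩
    rw [geom_sum_eq hz]
    have hpow : Complex.exp (θ * Complex.I) ^ (2 * N) = 1 := by
      rw [← Complex.exp_nat_mul]
      have hNc : (N : ℂ) ≠ 0 := Nat.cast_ne_zero.mpr hN.ne'
      have : ((2 * N : ℕ) : ℂ) * (θ * Complex.I) = (m : ℤ) * (2 * ↑π * Complex.I) := by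
        rw [hθ]; push_cast; field_simp
      rw [this, Complex.exp_int_mul_two_pi_mul_I]
    rw [hpow]
    simp

lemma reflect_term (N : ℕ) (hN : 0 < N) (m : ℤ) (k : ℕ) (hk : k ≤ N) :
    Real.cos ((m : ℝ) * (N + k) * π / N) = Real.cos ((m : ℝ) * ((N - k : ℕ) : ℝ) * π / N) := by
  have hNr : (N : ℝ) ≠ 0 := Nat.cast_ne_zero.mpr hN.ne'
  have h1 : (m : ℝ) * (N + k) * π / N = m * π + m * k * π / N := by
    field_simp
  have h2 : (m : ℝ) * ((N - k : ℕ) : ℝ) * π / N = m * π - m * k * π / N := by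
    rw [Nat.cast_sub hk]; field_simp
  rw [h1, h2, Real.cos_add, Real.cos_sub, Real.sin_int_mul_pi]
  ring

lemma weighted_sum (N : ℕ) (hN : 0 < N) (m : ℤ) :
    ∑ k ∈ Finset.range (N + 1),
      (if k = 0 ∨ k = N then (1 / 2 : ℝ) else 1) * Real.cos ((m : ℝ) * k * π / N) =
      if (2 * (N : ℤ)) ∣ m then (N : ℝ) else 0 := by
  set f : ℕ → ℝ := fun k => Real.cos ((m : ℝ) * k * π / N) with hf
  -- step 1: weighted sum = plain sum - f 0 / 2 - f N / 2
  have step1 : ∑ k ∈ Finset.range (N + 1),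
      (if k = 0 ∨ k = N then (1 / 2 : ℝ) else 1) * f k =
      (∑ k ∈ Finset.range (N + 1), f k) - f 0 / 2 - f N / 2 := by
    have hcong : ∀ k ∈ Finset.range (N + 1),
        (if k = 0 ∨ k = N then (1 / 2 : ℝ) else 1) * f k =
        f k + (if k = 0 then -(f 0) / 2 else 0) + (if k = N then -(f N) / 2 else 0) := by
      intro k _
      rcases eq_or_ne k 0 with rfl | h0
      · have : ¬ ((0 : ℕ) = N) := by omega
        simp [this]
        ring
      · rcases eq_or_ne k N with rfl | hn
        · simp [h0]
          ring
        · simp [h0, hn]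
    rw [Finset.sum_congr rfl hcong, Finset.sum_add_distrib, Finset.sum_add_distrib,
      Finset.sum_ite_eq' (Finset.range (N + 1)) 0 (fun _ => -(f 0) / 2),
      Finset.sum_ite_eq' (Finset.range (N + 1)) N (fun _ => -(f N) / 2)]
    have h0m : (0 : ℕ) ∈ Finset.range (N + 1) := by simp
    have hNm : N ∈ Finset.range (N + 1) := by simp
    rw [if_pos h0m, if_pos hNm]
    ring
  -- step 2: full sum over range (2N) = 2 * plain sum - f 0 - f N
  have step2 : ∑ k ∈ Finset.range (2 * N), f k =
      2 * (∑ k ∈ Finset.range (N + 1), f k) - f 0 - f N := by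
    have hsplit : ∑ k ∈ Finset.range (2 * N), f k =
        (∑ k ∈ Finset.range N, f k) + ∑ k ∈ Finset.Ico N (2 * N), f k := by
      rw [Finset.range_eq_Ico, ← Finset.sum_Ico_consecutive f (Nat.zero_le N) (by omega),
        ← Finset.range_eq_Ico]
    have hIco : ∑ k ∈ Finset.Ico N (2 * N), f k = ∑ k ∈ Finset.range N, f (N + k) := by
      rw [Finset.sum_Ico_eq_sum_range]
      have h2 : 2 * N - N = N := by omega
      rw [h2]
    have hrefl : ∀ k ∈ Finset.range N, f (N + k) = f (N - k) := by
      intro k hk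
      rw [Finset.mem_range] at hk
      have := reflect_term N hN m k hk.le
      simpa [hf] using this
    have hrefl2 : ∑ k ∈ Finset.range N, f (N - k) = ∑ k ∈ Finset.range N, f (k + 1) := by
      have := Finset.sum_range_reflect (fun j => f (j + 1)) N
      rw [← this]
      apply Finset.sum_congr rfl
      intro k hk
      rw [Finset.mem_range] at hk
      congr 1
      omega
    have hs1 : ∑ k ∈ Finset.range (N + 1), f k = (∑ k ∈ Finset.range N, f k) + f N :=
      Finset.sum_range_succ f N
    have hs2 : ∑ k ∈ Finset.range (N + 1), f k = (∑ k ∈ Finset.range N, f (k + 1)) + f 0 :=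
      Finset.sum_range_succ' f N
    rw [hsplit, hIco, Finset.sum_congr rfl hrefl, hrefl2]
    linarith [hs1, hs2]
  rw [step1]
  have := full_sum N hN m
  rw [← hf] at this
  by_cases h : (2 * (N : ℤ)) ∣ m
  · rw [if_pos h] at this ⊢
    push_cast at this
    linarith [step2, this]
  · rw [if_neg h] at this ⊢
    linarith [step2, this]

theorem dct_matrix_inverse (N : ℕ) (hN : 0 < N) :
    let ε : Fin (N + 1) → Fin (N + 1) → ℝ := fun j k =>
      if ((j : ℕ) = 0 ∨ (j : ℕ) = N) ∧ ((k : ℕ) = 0 ∨ (k : ℕ) = N) then 1 / 4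
      else if ((j : ℕ) = 0 ∨ (j : ℕ) = N) ∨ ((k : ℕ) = 0 ∨ (k : ℕ) = N) then 1 / 2
      else 1
    let M : Matrix (Fin (N + 1)) (Fin (N + 1)) ℝ := fun j k =>
      (2 / (N : ℝ)) * ε j k * Real.cos ((j : ℝ) * (k : ℝ) * π / N)
    let P : Matrix (Fin (N + 1)) (Fin (N + 1)) ℝ := fun j k =>
      Real.cos ((j : ℝ) * (k : ℝ) * π / N)
    M * P = 1 := by
  intro ε M P
  have hNr : (N : ℝ) ≠ 0 := Nat.cast_ne_zero.mpr hN.ne'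
  ext j l
  rw [Matrix.mul_apply, Matrix.one_apply]
  have hε : ∀ (a b : Fin (N + 1)), ε a b =
      (if (a : ℕ) = 0 ∨ (a : ℕ) = N then (1 / 2 : ℝ) else 1) *
      (if (b : ℕ) = 0 ∨ (b : ℕ) = N then (1 / 2 : ℝ) else 1) := by
    intro a b
    show (if _ then (1/4 : ℝ) else if _ then 1/2 else 1) = _
    by_cases ha : (a : ℕ) = 0 ∨ (a : ℕ) = N <;>
      by_cases hb : (b : ℕ) = 0 ∨ (b : ℕ) = N <;>
      simp only [ha, hb, and_self, and_true, true_and, or_true, true_or, and_false, false_and,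
        or_false, false_or, if_true, if_false] <;> norm_num
  set m₁ : ℤ := ((j : ℕ) : ℤ) + ((l : ℕ) : ℤ) with hm1
  set m₂ : ℤ := ((j : ℕ) : ℤ) - ((l : ℕ) : ℤ) with hm2
  have hterm : ∀ k : Fin (N + 1), M j k * P k l =
      ((if (j : ℕ) = 0 ∨ (j : ℕ) = N then (1 / 2 : ℝ) else 1) / N) *
        ((if (k : ℕ) = 0 ∨ (k : ℕ) = N then (1 / 2 : ℝ) else 1) *
            Real.cos ((m₁ : ℝ) * (k : ℕ) * π / N) +
         (if (k : ℕ) = 0 ∨ (k : ℕ) = N then (1 / 2 : ℝ) else 1) *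
            Real.cos ((m₂ : ℝ) * (k : ℕ) * π / N)) := by
    intro k
    show (2 / (N : ℝ)) * ε j k * Real.cos ((j : ℝ) * (k : ℝ) * π / N) *
        Real.cos ((k : ℝ) * (l : ℝ) * π / N) = _
    rw [hε]
    have hA : ((j : ℝ) * (k : ℝ) * π / N) + ((k : ℝ) * (l : ℝ) * π / N)
        = (m₁ : ℝ) * ((k : ℕ) : ℝ) * π / N := by
      rw [hm1]; push_cast; field_simp
    have hB : ((j : ℝ) * (k : ℝ) * π / N) - ((k : ℝ) * (l : ℝ) * π / N)
        = (m₂ : ℝ) * ((k : ℕ) : ℝ) * π / N := by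
      rw [hm2]; push_cast; field_simp
    have hcc : Real.cos ((j : ℝ) * (k : ℝ) * π / N) * Real.cos ((k : ℝ) * (l : ℝ) * π / N)
        = (Real.cos ((m₁ : ℝ) * ((k : ℕ) : ℝ) * π / N)
           + Real.cos ((m₂ : ℝ) * ((k : ℕ) : ℝ) * π / N)) / 2 := by
      rw [← hA, ← hB, Real.cos_add, Real.cos_sub]; ring
    rw [mul_assoc, hcc]
    ring
  calc ∑ k : Fin (N + 1), M j k * P k l
      = ∑ k : Fin (N + 1), (fun n : ℕ =>
          ((if (j : ℕ) = 0 ∨ (j : ℕ) = N then (1 / 2 : ℝ) else 1) / N) *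
            ((if n = 0 ∨ n = N then (1 / 2 : ℝ) else 1) * Real.cos ((m₁ : ℝ) * n * π / N) +
             (if n = 0 ∨ n = N then (1 / 2 : ℝ) else 1) * Real.cos ((m₂ : ℝ) * n * π / N)))
          (k : ℕ) := Finset.sum_congr rfl (fun k _ => hterm k)
    _ = ∑ n ∈ Finset.range (N + 1),
          ((if (j : ℕ) = 0 ∨ (j : ℕ) = N then (1 / 2 : ℝ) else 1) / N) *
            ((if n = 0 ∨ n = N then (1 / 2 : ℝ) else 1) * Real.cos ((m₁ : ℝ) * n * π / N) +
             (if n = 0 ∨ n = N then (1 / 2 : ℝ) else 1) * Real.cos ((m₂ : ℝ) * n * π / N)) :=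
        Fin.sum_univ_eq_sum_range (fun n : ℕ =>
          ((if (j : ℕ) = 0 ∨ (j : ℕ) = N then (1 / 2 : ℝ) else 1) / N) *
            ((if n = 0 ∨ n = N then (1 / 2 : ℝ) else 1) * Real.cos ((m₁ : ℝ) * n * π / N) +
             (if n = 0 ∨ n = N then (1 / 2 : ℝ) else 1) * Real.cos ((m₂ : ℝ) * n * π / N)))
          (N + 1)
    _ = ((if (j : ℕ) = 0 ∨ (j : ℕ) = N then (1 / 2 : ℝ) else 1) / N) *
          ((if (2 * (N : ℤ)) ∣ m₁ then (N : ℝ) else 0) +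
           (if (2 * (N : ℤ)) ∣ m₂ then (N : ℝ) else 0)) := by
        rw [← Finset.mul_sum, Finset.sum_add_distrib, weighted_sum N hN m₁,
          weighted_sum N hN m₂]
    _ = if j = l then 1 else 0 := by
        by_cases hjl : j = l
        · subst hjl
          have hd2 : (2 * (N : ℤ)) ∣ m₂ := by rw [hm2]; simp
          rw [if_pos hd2, if_pos rfl]
          by_cases hj : (j : ℕ) = 0 ∨ (j : ℕ) = N
          · have hd1 : (2 * (N : ℤ)) ∣ m₁ := by
              rcases hj with h | h
              · exact ⟨0, by rw [hm1]; omega⟩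
              · exact ⟨1, by rw [hm1]; omega⟩
            rw [if_pos hj, if_pos hd1]
            field_simp
            ring
          · have hd1 : ¬ (2 * (N : ℤ)) ∣ m₁ := by
              intro hdvd
              have hjN : (j : ℕ) < N + 1 := j.isLt
              push_neg at hj
              have h1 : 0 < m₁ := by rw [hm1]; omega
              have h2 := Int.le_of_dvd h1 hdvd
              rw [hm1] at h2
              omega
            rw [if_neg hj, if_neg hd1]
            field_simp
            ring
        · have hne : (j : ℕ) ≠ (l : ℕ) := fun h => hjl (Fin.ext h)
          have hjN : (j : ℕ) < N + 1 := j.isLt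
          have hlN : (l : ℕ) < N + 1 := l.isLt
          have hd1 : ¬ (2 * (N : ℤ)) ∣ m₁ := by
            intro hdvd
            rcases eq_or_lt_of_le (show (0 : ℤ) ≤ m₁ by rw [hm1]; omega) with h0 | h0
            · rw [hm1] at h0; omega
            · have h2 := Int.le_of_dvd h0 hdvd
              rw [hm1] at h2
              omega
          have hd2 : ¬ (2 * (N : ℤ)) ∣ m₂ := by
            intro hdvd
            have hne0 : m₂ ≠ 0 := by rw [hm2]; omega
            have h2 := Int.le_of_dvd (abs_pos.mpr hne0) ((dvd_abs _ _).mpr hdvd)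
            rcases abs_cases m₂ with ⟨h3, _⟩ | ⟨h3, _⟩ <;>
              rw [h3, hm2] at h2 <;> omega
          rw [if_neg hd1, if_neg hd2, if_neg hjl]
          ring
end
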